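/- arXiv:1810.05398 — 2 statements merged into one kernel-verified Lean document; each statement's English description precedes it below -/
import Mathlib

section
/- Let x ~ Binomial(n, 1/2), and let the posterior odds of H1: p = 0.4 versus H2: p = 0.6 (equal priors) be (0.4/0.6)^(2x−n). Then as n → ∞, the probability that P1 > 1 − α converges to 1/2 for each fixed 0 < α < 1/2, and likewise for P1 < α. -/
open Real Filter Finset
open scoped Classical

lemma aux_central (m : ℕ) : ((Nat.centralBinom m : ℝ))^2 * (2*m+1) ≤ 16^m := by
  induction m with
  | zero => simp [Nat.centralBinom]
  | succ m ih =>
    set c : ℝ := (Nat.centralBinom m : ℝ) with hc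
    set c' : ℝ := (Nat.centralBinom (m+1) : ℝ) with hc'
    have heq : ((m:ℝ)+1) * c' = 2*(2*(m:ℝ)+1) * c := by
      rw [hc, hc']
      exact_mod_cast congrArg (Nat.cast (R := ℝ)) (Nat.succ_mul_centralBinom_succ m)
    have hm1 : (0:ℝ) < ((m:ℝ)+1)^2 := by positivity
    rw [← mul_le_mul_iff_right₀ hm1]
    have hsq : (((m:ℝ)+1) * c')^2 = (2*(2*(m:ℝ)+1) * c)^2 := by rw [heq]
    have step : 4*(2*(m:ℝ)+1)^2*(2*(m:ℝ)+3) * c^2 ≤ 16*((m:ℝ)+1)^2 * 16^m := by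
      have h1 : 4*(2*(m:ℝ)+1)*(2*(m:ℝ)+3) ≤ 16*((m:ℝ)+1)^2 := by
        nlinarith [(by positivity : (0:ℝ) ≤ (m:ℝ))]
      calc 4*(2*(m:ℝ)+1)^2*(2*(m:ℝ)+3) * c^2
          = (4*(2*(m:ℝ)+1)*(2*(m:ℝ)+3)) * (c^2*(2*(m:ℝ)+1)) := by ring
        _ ≤ (16*((m:ℝ)+1)^2) * 16^m := by
            apply mul_le_mul h1 ih (by positivity) (by positivity)
    push_cast
    calc ((m:ℝ)+1)^2 * (c'^2 * (2*((m:ℝ)+1)+1))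
        = (((m:ℝ)+1) * c')^2 * (2*(m:ℝ)+3) := by ring
      _ = (2*(2*(m:ℝ)+1) * c)^2 * (2*(m:ℝ)+3) := by rw [hsq]
      _ = 4*(2*(m:ℝ)+1)^2*(2*(m:ℝ)+3) * c^2 := by ring
      _ ≤ 16*((m:ℝ)+1)^2 * 16^m := step
      _ = ((m:ℝ)+1)^2 * 16^(m+1) := by ring

lemma aux_middle (n : ℕ) (hn : 1 ≤ n) :
    ((n.choose (n/2) : ℝ)) * (1/2)^n ≤ 1 / Real.sqrt n := by
  have hn0 : (0:ℝ) < n := by exact_mod_cast hn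
  have key : (((n.choose (n/2) : ℝ)) * (1/2)^n)^2 ≤ 1 / n := by
    rcases Nat.even_or_odd n with ⟨m, hme⟩ | ⟨m, hmo⟩
    · have hm' : n = 2*m := by omega
      subst hm'
      have hdiv : (2*m)/2 = m := by omega
      rw [hdiv]
      have hcb : (2*m).choose m = Nat.centralBinom m := rfl
      rw [hcb]
      have h := aux_central m
      have hq : ((Nat.centralBinom m : ℝ) * (1/2)^(2*m))^2
          = (Nat.centralBinom m : ℝ)^2 / 16^m := by
        rw [mul_pow, ← pow_mul, div_pow, one_pow]
        congr 1
        rw [show (16:ℝ) = 2^4 by norm_num, ← pow_mul]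
        ring_nf
      rw [hq, div_le_div_iff₀ (by positivity) hn0]
      have hmn : (0:ℝ) ≤ (Nat.centralBinom m : ℝ)^2 := sq_nonneg _
      push_cast
      nlinarith [h, hmn]
    · have hdiv : n/2 = m := by omega
      rw [hdiv]
      have h2 : Nat.centralBinom (m+1) = 2 * (n.choose m) := by
        rw [Nat.centralBinom, show 2*(m+1) = n+1 by omega, Nat.choose_succ_succ]
        have hsymm : n.choose (m+1) = n.choose m := by
          rw [← Nat.choose_symm (by omega : m ≤ n)]
          congr 1; omega
        rw [hsymm]; omega
      have hch : (n.choose m : ℝ) = (Nat.centralBinom (m+1) : ℝ) / 2 := by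
        have := congrArg (Nat.cast (R := ℝ)) h2
        push_cast at this; linarith
      rw [hch]
      have h := aux_central (m+1)
      have hpow : ((2:ℝ) * 2^n)^2 = 16^(m+1) := by
        rw [mul_pow, ← pow_mul, show (16:ℝ) = 2^4 by norm_num, ← pow_mul,
          show ((2:ℝ))^2 = 2^2 from rfl, ← pow_add]
        congr 1; omega
      have hcollect : (Nat.centralBinom (m+1) : ℝ)/2 * (1/2)^n
          = (Nat.centralBinom (m+1) : ℝ) / (2*2^n) := by
        rw [div_pow, one_pow]; ring
      have hq : ((Nat.centralBinom (m+1) : ℝ) / 2 * (1/2)^n)^2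
          = (Nat.centralBinom (m+1) : ℝ)^2 / 16^(m+1) := by
        rw [hcollect, div_pow, hpow]
      rw [hq, div_le_div_iff₀ (by positivity) hn0]
      have hmn : (0:ℝ) ≤ (Nat.centralBinom (m+1) : ℝ)^2 := sq_nonneg _
      have hnm : (n:ℝ) = 2*m+1 := by exact_mod_cast congrArg (Nat.cast (R := ℝ)) hmo
      rw [hnm]
      push_cast at h ⊢
      nlinarith [h, hmn]
  rw [show (1:ℝ) / Real.sqrt n = Real.sqrt (1/n) by
    rw [one_div, one_div, Real.sqrt_inv]]
  exact Real.le_sqrt_of_sq_le key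

lemma aux_sum_one (n : ℕ) :
    ∑ x ∈ Finset.range (n+1), ((n.choose x : ℝ) * (1/2:ℝ)^n) = 1 := by
  rw [← Finset.sum_mul]
  have h : (∑ x ∈ Finset.range (n+1), ((n.choose x : ℝ))) = (2:ℝ)^n := by
    exact_mod_cast congrArg (Nat.cast (R := ℝ)) (Nat.sum_range_choose n)
  rw [h, ← mul_pow]
  norm_num

lemma aux_main (B : ℝ) (hB : 0 < B) :
    Tendsto (fun n : ℕ => ∑ x ∈ Finset.range (n+1),
        (n.choose x : ℝ) * (1/2:ℝ)^n *
          (if 2*(x:ℝ) < (n:ℝ) - B then 1 else 0)) atTop (nhds (1/2)) ∧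
    Tendsto (fun n : ℕ => ∑ x ∈ Finset.range (n+1),
        (n.choose x : ℝ) * (1/2:ℝ)^n *
          (if (n:ℝ) + B < 2*(x:ℝ) then 1 else 0)) atTop (nhds (1/2)) := by
  classical
  set F : ℕ → ℝ := fun n => ∑ x ∈ Finset.range (n+1),
      (n.choose x : ℝ) * (1/2:ℝ)^n * (if 2*(x:ℝ) < (n:ℝ) - B then 1 else 0) with hF
  set G : ℕ → ℝ := fun n => ∑ x ∈ Finset.range (n+1),
      (n.choose x : ℝ) * (1/2:ℝ)^n * (if (n:ℝ) + B < 2*(x:ℝ) then 1 else 0) with hG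
  set M : ℕ → ℝ := fun n => ∑ x ∈ Finset.range (n+1),
      (n.choose x : ℝ) * (1/2:ℝ)^n *
        (if (n:ℝ) - B ≤ 2*(x:ℝ) ∧ 2*(x:ℝ) ≤ (n:ℝ) + B then 1 else 0) with hM
  have tri : ∀ u v : ℝ, ((if 2*u < v - B then (1:ℝ) else 0) +
      (if v + B < 2*u then 1 else 0) +
      (if v - B ≤ 2*u ∧ 2*u ≤ v + B then 1 else 0)) = 1 := by
    intro u v
    by_cases h1 : 2*u < v - B
    · rw [if_pos h1, if_neg (by intro h; linarith), if_neg (by intro h; linarith [h.1])]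
      norm_num
    · by_cases h2 : v + B < 2*u
      · rw [if_neg h1, if_pos h2, if_neg (by intro h; linarith [h.2])]
        norm_num
      · rw [if_neg h1, if_neg h2, if_pos ⟨by linarith, by linarith⟩]
        norm_num
  have hGF : ∀ n, G n = F n := by
    intro n
    have hrefl := Finset.sum_range_reflect (fun x => (n.choose x : ℝ) * (1/2:ℝ)^n *
      (if 2*(x:ℝ) < (n:ℝ) - B then 1 else 0)) (n+1)
    rw [hG, hF]
    beta_reduce
    rw [← hrefl]
    apply Finset.sum_congr rfl
    intro x hx
    have hx' : x ≤ n := Nat.lt_succ_iff.mp (Finset.mem_range.mp hx)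
    simp only [Nat.add_sub_cancel]
    rw [Nat.choose_symm hx']
    congr 1
    apply if_congr _ rfl rfl
    rw [Nat.cast_sub hx']
    push_cast
    constructor <;> intro <;> linarith
  have hpart : ∀ n, F n + G n + M n = 1 := by
    intro n
    calc F n + G n + M n
        = ∑ x ∈ Finset.range (n+1), ((n.choose x : ℝ) * (1/2:ℝ)^n *
            ((if 2*(x:ℝ) < (n:ℝ) - B then 1 else 0) +
             (if (n:ℝ) + B < 2*(x:ℝ) then 1 else 0) +
             (if (n:ℝ) - B ≤ 2*(x:ℝ) ∧ 2*(x:ℝ) ≤ (n:ℝ) + B then 1 else 0))) := by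
          rw [hF, hG, hM]
          beta_reduce
          rw [← Finset.sum_add_distrib, ← Finset.sum_add_distrib]
          apply Finset.sum_congr rfl
          intro x _
          ring
      _ = ∑ x ∈ Finset.range (n+1), ((n.choose x : ℝ) * (1/2:ℝ)^n) := by
          apply Finset.sum_congr rfl
          intro x _
          rw [tri (x:ℝ) (n:ℝ), mul_one]
      _ = 1 := aux_sum_one n
  have hM0 : ∀ n, 0 ≤ M n := by
    intro n
    apply Finset.sum_nonneg
    intro x _
    apply mul_nonneg (by positivity)
    split_ifs <;> norm_num
  have hMle : ∀ n, 1 ≤ n → M n ≤ (B+1) * (1/Real.sqrt n) := by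
    intro n hn
    set s : Finset ℕ := (Finset.range (n+1)).filter
      (fun x => (n:ℝ) - B ≤ 2*(x:ℝ) ∧ 2*(x:ℝ) ≤ (n:ℝ) + B) with hs
    have hMs : M n = ∑ x ∈ s, ((n.choose x : ℝ) * (1/2:ℝ)^n) := by
      rw [hM]
      beta_reduce
      rw [hs, Finset.sum_filter]
      apply Finset.sum_congr rfl
      intro x _
      split_ifs <;> simp
    have hterm : ∀ x ∈ s, (n.choose x : ℝ) * (1/2:ℝ)^n ≤ 1/Real.sqrt n := by
      intro x _
      calc (n.choose x : ℝ) * (1/2:ℝ)^n ≤ (n.choose (n/2) : ℝ) * (1/2:ℝ)^n := by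
            apply mul_le_mul_of_nonneg_right _ (by positivity)
            exact_mod_cast Nat.choose_le_middle x n
        _ ≤ 1/Real.sqrt n := aux_middle n hn
    have hsum_le : ∑ x ∈ s, ((n.choose x : ℝ) * (1/2:ℝ)^n)
        ≤ (s.card : ℝ) * (1/Real.sqrt n) := by
      have := Finset.sum_le_card_nsmul s _ _ hterm
      simpa [nsmul_eq_mul] using this
    have hsqrt_nonneg : (0:ℝ) ≤ 1/Real.sqrt n := by positivity
    have hcard : (s.card : ℝ) ≤ B + 1 := by
      set a : ℕ := ⌈((n:ℝ) - B)/2⌉₊ with ha'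
      set b : ℕ := ⌊((n:ℝ) + B)/2⌋₊ with hb'
      have hsub : s ⊆ Finset.Icc a b := by
        intro x hx
        obtain ⟨_, h1, h2⟩ := Finset.mem_filter.mp hx
        rw [Finset.mem_Icc]
        constructor
        · exact Nat.ceil_le.mpr (by linarith)
        · exact Nat.le_floor (by linarith)
      have hbub : (b:ℝ) ≤ ((n:ℝ) + B)/2 := by
        apply Nat.floor_le
        have : (0:ℝ) ≤ (n:ℝ) := Nat.cast_nonneg n
        linarith
      have haub : ((n:ℝ) - B)/2 ≤ (a:ℝ) := Nat.le_ceil _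
      rcases le_or_gt a (b+1) with hab | hab
      · have h1 : s.card ≤ b + 1 - a := by
          rw [← Nat.card_Icc]
          exact Finset.card_le_card hsub
        have h2 : ((b + 1 - a : ℕ):ℝ) = (b:ℝ) + 1 - (a:ℝ) := by
          rw [Nat.cast_sub hab]
          push_cast
          ring
        have h3 := (Nat.cast_le (α := ℝ)).mpr h1
        rw [h2] at h3
        linarith
      · have hempty : Finset.Icc a b = ∅ := Finset.Icc_eq_empty (by omega)
        have hs0 : s = ∅ := Finset.subset_empty.mp (hempty ▸ hsub)
        rw [hs0]
        simp
        linarith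
    calc M n = ∑ x ∈ s, ((n.choose x : ℝ) * (1/2:ℝ)^n) := hMs
      _ ≤ (s.card : ℝ) * (1/Real.sqrt n) := hsum_le
      _ ≤ (B+1) * (1/Real.sqrt n) := mul_le_mul_of_nonneg_right hcard hsqrt_nonneg
  have hMtend : Tendsto M atTop (nhds 0) := by
    apply squeeze_zero' (Eventually.of_forall hM0)
      (eventually_atTop.mpr ⟨1, fun n hn => hMle n hn⟩)
    have hs : Tendsto (fun n : ℕ => Real.sqrt n) atTop atTop := by
      apply Filter.tendsto_atTop_atTop.mpr
      intro b
      refine ⟨⌈b^2⌉₊, fun n hn => ?_⟩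
      rcases le_or_gt b 0 with hb0 | hb0
      · exact le_trans hb0 (Real.sqrt_nonneg _)
      · refine (Real.le_sqrt hb0.le (Nat.cast_nonneg n)).mpr ?_
        exact_mod_cast Nat.ceil_le.mp hn
    have hinv : Tendsto (fun n : ℕ => 1/Real.sqrt n) atTop (nhds 0) := by
      simpa [one_div, Pi.inv_def] using hs.inv_tendsto_atTop
    simpa using hinv.const_mul (B+1)
  have hFeq : ∀ n, F n = (1 - M n)/2 := by
    intro n
    have h1 := hpart n
    have h2 := hGF n
    linarith
  have hFt : Tendsto F atTop (nhds (1/2)) := by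
    have h : Tendsto (fun n => (1 - M n)/2) atTop (nhds ((1 - 0)/2)) :=
      (tendsto_const_nhds.sub hMtend).div_const 2
    rw [show ((1:ℝ) - 0)/2 = 1/2 by norm_num] at h
    exact h.congr (fun n => (hFeq n).symm)
  exact ⟨hFt, hFt.congr (fun n => (hGF n).symm)⟩

set_option maxHeartbeats 1000000 in
/-- Fair-coin paradox: with `x ~ Binomial(n, 1/2)` and posterior probability
`P1` of `H1 : p = 0.4` versus `H2 : p = 0.6` (equal priors), for each fixed
`0 < α < 1/2` the probability that `P1 > 1 - α` converges to `1/2`, and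
likewise for `P1 < α`. -/
theorem fair_coin_polarized_limit
    (α : ℝ) (hα0 : 0 < α) (hα : α < 1 / 2)
    (P1 : ℕ → ℕ → ℝ)
    (hP1 : ∀ n x, P1 n x =
      ((n.choose x : ℝ) * (0.4 : ℝ) ^ x * (0.6 : ℝ) ^ (n - x)) /
        ((n.choose x : ℝ) * (0.4 : ℝ) ^ x * (0.6 : ℝ) ^ (n - x) +
          (n.choose x : ℝ) * (0.6 : ℝ) ^ x * (0.4 : ℝ) ^ (n - x))) :
    Tendsto (fun n : ℕ =>
        ∑ x ∈ Finset.range (n + 1),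
          (n.choose x : ℝ) * (1 / 2 : ℝ) ^ n *
            (if 1 - α < P1 n x then 1 else 0))
      atTop (nhds (1 / 2)) ∧
    Tendsto (fun n : ℕ =>
        ∑ x ∈ Finset.range (n + 1),
          (n.choose x : ℝ) * (1 / 2 : ℝ) ^ n *
            (if P1 n x < α then 1 else 0))
      atTop (nhds (1 / 2)) := by
  have h1α : (0:ℝ) < 1 - α := by linarith
  have hL : (0:ℝ) < Real.log 0.6 - Real.log 0.4 :=
    sub_pos.mpr (Real.log_lt_log (by norm_num) (by norm_num))
  set L : ℝ := Real.log 0.6 - Real.log 0.4 with hLdef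
  set B : ℝ := (Real.log (1-α) - Real.log α) / L with hBdef
  have hB : 0 < B := div_pos (sub_pos.mpr (Real.log_lt_log hα0 (by linarith))) hL
  -- key equivalences
  have hiff1 : ∀ n x : ℕ, x ≤ n →
      (1 - α < P1 n x ↔ 2*(x:ℝ) < (n:ℝ) - B) := by
    intro n x hx
    rw [hP1 n x]
    have hc : (0:ℝ) < (n.choose x : ℝ) := by exact_mod_cast Nat.choose_pos hx
    have hA : (0:ℝ) < (0.4:ℝ)^x * (0.6:ℝ)^(n-x) := by positivity
    have hC : (0:ℝ) < (0.6:ℝ)^x * (0.4:ℝ)^(n-x) := by positivity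
    have ha : (0:ℝ) < (n.choose x : ℝ) * (0.4:ℝ)^x * (0.6:ℝ)^(n-x) := by
      rw [mul_assoc]; exact mul_pos hc hA
    have hb : (0:ℝ) < (n.choose x : ℝ) * (0.6:ℝ)^x * (0.4:ℝ)^(n-x) := by
      rw [mul_assoc]; exact mul_pos hc hC
    rw [lt_div_iff₀ (by linarith)]
    have stepA : ((1 - α) * ((n.choose x : ℝ) * (0.4:ℝ)^x * (0.6:ℝ)^(n-x) +
          (n.choose x : ℝ) * (0.6:ℝ)^x * (0.4:ℝ)^(n-x)) <
          (n.choose x : ℝ) * (0.4:ℝ)^x * (0.6:ℝ)^(n-x)) ↔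
        ((1-α) * ((0.6:ℝ)^x * (0.4:ℝ)^(n-x)) < α * ((0.4:ℝ)^x * (0.6:ℝ)^(n-x))) := by
      rw [show (1-α) * ((n.choose x : ℝ) * (0.4:ℝ)^x * (0.6:ℝ)^(n-x) +
            (n.choose x : ℝ) * (0.6:ℝ)^x * (0.4:ℝ)^(n-x)) =
          (n.choose x : ℝ) * ((1-α) * ((0.6:ℝ)^x * (0.4:ℝ)^(n-x))) +
          (1-α) * ((n.choose x : ℝ) * ((0.4:ℝ)^x * (0.6:ℝ)^(n-x))) by ring,
        show (n.choose x : ℝ) * (0.4:ℝ)^x * (0.6:ℝ)^(n-x) =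
          (n.choose x : ℝ) * ((0.4:ℝ)^x * (0.6:ℝ)^(n-x)) by ring]
      constructor
      · intro h
        rw [← mul_lt_mul_iff_right₀ hc]
        nlinarith [h]
      · intro h
        rw [← mul_lt_mul_iff_right₀ hc] at h
        nlinarith [h]
    have e1 : Real.log ((1-α) * ((0.6:ℝ)^x * (0.4:ℝ)^(n-x))) =
        Real.log (1-α) + (x:ℝ)*Real.log 0.6 + ((n:ℝ)-(x:ℝ))*Real.log 0.4 := by
      rw [Real.log_mul (ne_of_gt h1α) (by positivity),
        Real.log_mul (by positivity) (by positivity),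
        Real.log_pow, Real.log_pow, Nat.cast_sub hx]
      ring
    have e2 : Real.log (α * ((0.4:ℝ)^x * (0.6:ℝ)^(n-x))) =
        Real.log α + (x:ℝ)*Real.log 0.4 + ((n:ℝ)-(x:ℝ))*Real.log 0.6 := by
      rw [Real.log_mul (ne_of_gt hα0) (by positivity),
        Real.log_mul (by positivity) (by positivity),
        Real.log_pow, Real.log_pow, Nat.cast_sub hx]
      ring
    have stepB : ((1-α) * ((0.6:ℝ)^x * (0.4:ℝ)^(n-x)) < α * ((0.4:ℝ)^x * (0.6:ℝ)^(n-x))) ↔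
        (Real.log (1-α) - Real.log α < ((n:ℝ) - 2*(x:ℝ)) * L) := by
      rw [← Real.log_lt_log_iff (mul_pos h1α hC) (mul_pos hα0 hA), e1, e2, hLdef]
      constructor <;> intro h <;> nlinarith [h]
    have stepC : (Real.log (1-α) - Real.log α < ((n:ℝ) - 2*(x:ℝ)) * L) ↔
        2*(x:ℝ) < (n:ℝ) - B := by
      constructor
      · intro h
        have hBlt : B < (n:ℝ) - 2*(x:ℝ) := by
          rw [hBdef, div_lt_iff₀ hL]; linarith
        linarith
      · intro h
        have hBlt : B < (n:ℝ) - 2*(x:ℝ) := by linarith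
        rw [hBdef, div_lt_iff₀ hL] at hBlt
        linarith
    exact stepA.trans (stepB.trans stepC)
  have hiff2 : ∀ n x : ℕ, x ≤ n →
      (P1 n x < α ↔ (n:ℝ) + B < 2*(x:ℝ)) := by
    intro n x hx
    rw [hP1 n x]
    have hc : (0:ℝ) < (n.choose x : ℝ) := by exact_mod_cast Nat.choose_pos hx
    have hA : (0:ℝ) < (0.4:ℝ)^x * (0.6:ℝ)^(n-x) := by positivity
    have hC : (0:ℝ) < (0.6:ℝ)^x * (0.4:ℝ)^(n-x) := by positivity
    have ha : (0:ℝ) < (n.choose x : ℝ) * (0.4:ℝ)^x * (0.6:ℝ)^(n-x) := by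
      rw [mul_assoc]; exact mul_pos hc hA
    have hb : (0:ℝ) < (n.choose x : ℝ) * (0.6:ℝ)^x * (0.4:ℝ)^(n-x) := by
      rw [mul_assoc]; exact mul_pos hc hC
    rw [div_lt_iff₀ (by linarith)]
    have stepA : ((n.choose x : ℝ) * (0.4:ℝ)^x * (0.6:ℝ)^(n-x) <
          α * ((n.choose x : ℝ) * (0.4:ℝ)^x * (0.6:ℝ)^(n-x) +
          (n.choose x : ℝ) * (0.6:ℝ)^x * (0.4:ℝ)^(n-x))) ↔
        ((1-α) * ((0.4:ℝ)^x * (0.6:ℝ)^(n-x)) < α * ((0.6:ℝ)^x * (0.4:ℝ)^(n-x))) := by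
      rw [show α * ((n.choose x : ℝ) * (0.4:ℝ)^x * (0.6:ℝ)^(n-x) +
            (n.choose x : ℝ) * (0.6:ℝ)^x * (0.4:ℝ)^(n-x)) =
          (n.choose x : ℝ) * (α * ((0.6:ℝ)^x * (0.4:ℝ)^(n-x))) +
          α * ((n.choose x : ℝ) * ((0.4:ℝ)^x * (0.6:ℝ)^(n-x))) by ring,
        show (n.choose x : ℝ) * (0.4:ℝ)^x * (0.6:ℝ)^(n-x) =
          (n.choose x : ℝ) * ((0.4:ℝ)^x * (0.6:ℝ)^(n-x)) by ring]
      constructor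
      · intro h
        rw [← mul_lt_mul_iff_right₀ hc]
        nlinarith [h]
      · intro h
        rw [← mul_lt_mul_iff_right₀ hc] at h
        nlinarith [h]
    have e1 : Real.log ((1-α) * ((0.4:ℝ)^x * (0.6:ℝ)^(n-x))) =
        Real.log (1-α) + (x:ℝ)*Real.log 0.4 + ((n:ℝ)-(x:ℝ))*Real.log 0.6 := by
      rw [Real.log_mul (ne_of_gt h1α) (by positivity),
        Real.log_mul (by positivity) (by positivity),
        Real.log_pow, Real.log_pow, Nat.cast_sub hx]
      ring
    have e2 : Real.log (α * ((0.6:ℝ)^x * (0.4:ℝ)^(n-x))) =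
        Real.log α + (x:ℝ)*Real.log 0.6 + ((n:ℝ)-(x:ℝ))*Real.log 0.4 := by
      rw [Real.log_mul (ne_of_gt hα0) (by positivity),
        Real.log_mul (by positivity) (by positivity),
        Real.log_pow, Real.log_pow, Nat.cast_sub hx]
      ring
    have stepB : ((1-α) * ((0.4:ℝ)^x * (0.6:ℝ)^(n-x)) < α * ((0.6:ℝ)^x * (0.4:ℝ)^(n-x))) ↔
        (Real.log (1-α) - Real.log α < (2*(x:ℝ) - (n:ℝ)) * L) := by
      rw [← Real.log_lt_log_iff (mul_pos h1α hA) (mul_pos hα0 hC), e1, e2, hLdef]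
      constructor <;> intro h <;> nlinarith [h]
    have stepC : (Real.log (1-α) - Real.log α < (2*(x:ℝ) - (n:ℝ)) * L) ↔
        (n:ℝ) + B < 2*(x:ℝ) := by
      constructor
      · intro h
        have hBlt : B < 2*(x:ℝ) - (n:ℝ) := by
          rw [hBdef, div_lt_iff₀ hL]; linarith
        linarith
      · intro h
        have hBlt : B < 2*(x:ℝ) - (n:ℝ) := by linarith
        rw [hBdef, div_lt_iff₀ hL] at hBlt
        linarith
    exact stepA.trans (stepB.trans stepC)
  obtain ⟨hFt, hGt⟩ := aux_main B hB
  constructor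
  · refine hFt.congr fun n => ?_
    apply Finset.sum_congr rfl
    intro x hx
    have hx' : x ≤ n := Nat.lt_succ_iff.mp (Finset.mem_range.mp hx)
    exact congrArg _ (if_congr (hiff1 n x hx').symm rfl rfl)
  · refine hGt.congr fun n => ?_
    apply Finset.sum_congr rfl
    intro x hx
    have hx' : x ≤ n := Nat.lt_succ_iff.mp (Finset.mem_range.mp hx)
    exact congrArg _ (if_congr (hiff2 n x hx').symm rfl rfl)
end

section
/- If the truth is p = 1/2 and the compared models are H1: p = q1 and H2: p = q2 with 0 < q1 < q2 < 1/2 (both wrong in the same direction), then the posterior probability of the less wrong model H2 converges to 1 almost surely as n → ∞. -/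
open Real Filter Finset MeasureTheory ProbabilityTheory

/-- If the truth is `p = 1/2` and the compared models are `H1 : p = q₁` and
`H2 : p = q₂` with `0 < q₁ < q₂ < 1/2` (both wrong in the same direction),
then the posterior probability of the less wrong model `H2` converges to `1`
almost surely as `n → ∞`. -/
theorem less_wrong_model_wins_as
    {Ω : Type*} [MeasurableSpace Ω] (μ : Measure Ω) [IsProbabilityMeasure μ]
    (X : ℕ → Ω → Bool)
    (hmeas : ∀ i, Measurable (X i))
    (hindep : iIndepFun X μ)
    (hfair : ∀ i, μ (X i ⁻¹' {true}) = 1 / 2)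
    (q₁ q₂ : ℝ) (h0 : 0 < q₁) (h12 : q₁ < q₂) (h2 : q₂ < 1 / 2)
    (P2 : ℕ → Ω → ℝ)
    (hP2 : ∀ n ω, P2 n ω =
      (∏ i ∈ Finset.range n, (if X i ω then q₂ else 1 - q₂)) /
        ((∏ i ∈ Finset.range n, (if X i ω then q₁ else 1 - q₁)) +
          (∏ i ∈ Finset.range n, (if X i ω then q₂ else 1 - q₂)))) :
    ∀ᵐ ω ∂μ, Tendsto (fun n => P2 n ω) atTop (nhds 1) := by
  have hq2 : 0 < q₂ := h0.trans h12
  have h1q₂ : 0 < 1 - q₂ := by linarith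
  have h1q₁ : 0 < 1 - q₁ := by linarith
  set a := Real.log (q₁ / q₂) with ha
  set b := Real.log ((1 - q₁) / (1 - q₂)) with hb
  set f : Bool → ℝ := fun x => if x then a else b with hf
  have hfmeas : Measurable f := Measurable.of_discrete
  set Y : ℕ → Ω → ℝ := fun i => f ∘ X i with hY
  -- measures of preimages
  have hfalse : ∀ i, μ (X i ⁻¹' {false}) = 1 / 2 := by
    intro i
    have hset : X i ⁻¹' {false} = (X i ⁻¹' {true})ᶜ := by
      ext ω; cases h : X i ω <;> simp [h]
    rw [hset, measure_compl ((hmeas i) (by simp)) (measure_ne_top μ _), hfair i,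
      measure_univ]
    rw [show (1 : ENNReal) - 1/2 = 1/2 by
      rw [show (1 : ENNReal) / 2 = 2⁻¹ by rw [one_div]]
      exact ENNReal.one_sub_inv_two]
  -- identical distribution of the X i
  have hXid : ∀ i, IdentDistrib (X i) (X 0) μ μ := by
    intro i
    refine ⟨(hmeas i).aemeasurable, (hmeas 0).aemeasurable, ?_⟩
    refine Measure.ext fun s hs => ?_
    rw [Measure.map_apply (hmeas i) hs, Measure.map_apply (hmeas 0) hs]
    have hs4 : s = ∅ ∨ s = {true} ∨ s = {false} ∨ s = Set.univ := by
      by_cases ht : true ∈ s <;> by_cases hfs : false ∈ s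
      · right; right; right; ext x; cases x <;> simp [ht, hfs]
      · right; left; ext x; cases x <;> simp [ht, hfs]
      · right; right; left; ext x; cases x <;> simp [ht, hfs]
      · left; ext x; cases x <;> simp [ht, hfs]
    rcases hs4 with rfl | rfl | rfl | rfl
    · simp
    · rw [hfair i, hfair 0]
    · rw [hfalse i, hfalse 0]
    · rw [Set.preimage_univ, Set.preimage_univ]
  have hYid : ∀ i, IdentDistrib (Y i) (Y 0) μ μ := fun i => (hXid i).comp hfmeas
  have hYindep : Pairwise (Function.onFun (IndepFun · · μ) Y) := fun i j hij =>
    (hindep.indepFun hij).comp hfmeas hfmeas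
  -- integrability and expectation
  have hYmeas : Measurable (Y 0) := hfmeas.comp (hmeas 0)
  have hYint : Integrable (Y 0) μ := by
    refine Integrable.mono' (integrable_const (max |a| |b|)) hYmeas.aestronglyMeasurable ?_
    filter_upwards with ω
    by_cases h : X 0 ω
    · simp only [hY, hf, Function.comp_apply, h, if_true]
      exact le_max_left _ _
    · simp only [hY, hf, Function.comp_apply, h, if_false]
      exact le_max_right _ _
  have hEY : μ[Y 0] = (a + b) / 2 := by
    have hsmeas : MeasurableSet (X 0 ⁻¹' {true}) := (hmeas 0) (by simp)
    have hdecomp : Y 0 = fun ω =>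
        Set.indicator (X 0 ⁻¹' {true}) (fun _ => a) ω +
        Set.indicator ((X 0 ⁻¹' {true})ᶜ) (fun _ => b) ω := by
      funext ω
      by_cases h : X 0 ω <;>
        simp [hY, hf, h, Set.indicator_apply, Set.mem_preimage]
    rw [show μ[Y 0] = ∫ ω, Y 0 ω ∂μ from rfl, hdecomp]
    rw [integral_add ((integrable_const a).indicator hsmeas)
      ((integrable_const b).indicator hsmeas.compl)]
    rw [integral_indicator_const a hsmeas, integral_indicator_const b hsmeas.compl]
    rw [measureReal_def, measureReal_def, hfair 0, measure_compl hsmeas (measure_ne_top μ _), hfair 0, measure_univ]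
    rw [show (1 : ENNReal) - 1/2 = 1/2 by
      rw [show (1 : ENNReal) / 2 = 2⁻¹ by rw [one_div]]
      exact ENNReal.one_sub_inv_two]
    rw [show ((1 : ENNReal)/2).toReal = (1:ℝ)/2 by simp]
    simp [smul_eq_mul]; ring
  -- the mean is negative
  have hmneg : (a + b) / 2 < 0 := by
    have hab : a + b = Real.log ((q₁ / q₂) * ((1 - q₁) / (1 - q₂))) := by
      rw [ha, hb, ← Real.log_mul (by positivity) (by positivity)]
    have hx1 : (q₁ / q₂) * ((1 - q₁) / (1 - q₂)) < 1 := by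
      rw [div_mul_div_comm, div_lt_one (by positivity)]
      nlinarith
    have : a + b < 0 := by
      rw [hab]; exact Real.log_neg (by positivity) hx1
    linarith
  -- strong law of large numbers
  have hSLLN := strong_law_ae_real Y hYint hYindep hYid
  filter_upwards [hSLLN] with ω hω
  rw [hEY] at hω
  -- partial sums tend to -∞
  have hSbot : Tendsto (fun n : ℕ => ∑ i ∈ range n, Y i ω) atTop atBot := by
    have h1 : Tendsto (fun n : ℕ => (n : ℝ) * ((∑ i ∈ range n, Y i ω) / n))
        atTop atBot :=
      Tendsto.atTop_mul_neg hmneg tendsto_natCast_atTop_atTop hω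
    refine h1.congr' ?_
    filter_upwards [eventually_ge_atTop 1] with n hn
    have hn0 : (n : ℝ) ≠ 0 := by positivity
    field_simp
  -- the likelihood ratio tends to 0
  have hposif₁ : ∀ i, (0:ℝ) < if X i ω then q₁ else 1 - q₁ := by
    intro i; split <;> [exact h0; exact h1q₁]
  have hposif₂ : ∀ i, (0:ℝ) < if X i ω then q₂ else 1 - q₂ := by
    intro i; split <;> [exact hq2; exact h1q₂]
  have hRexp : ∀ n, (∏ i ∈ Finset.range n, (if X i ω then q₁ else 1 - q₁)) /
      (∏ i ∈ Finset.range n, (if X i ω then q₂ else 1 - q₂)) =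
      Real.exp (∑ i ∈ range n, Y i ω) := by
    intro n
    rw [Real.exp_sum, ← Finset.prod_div_distrib]
    refine Finset.prod_congr rfl fun i _ => ?_
    cases h : X i ω
    · simp only [hY, hf, Function.comp_apply, h, Bool.false_eq_true, if_false]
      rw [hb, Real.exp_log (by positivity)]
    · simp only [hY, hf, Function.comp_apply, h, if_true]
      rw [ha, Real.exp_log (by positivity)]
  have hR0 : Tendsto (fun n => (∏ i ∈ Finset.range n, (if X i ω then q₁ else 1 - q₁)) /
      (∏ i ∈ Finset.range n, (if X i ω then q₂ else 1 - q₂))) atTop (nhds 0) := by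
    simp only [hRexp]
    exact Real.tendsto_exp_atBot.comp hSbot
  -- rewrite P2 and conclude
  have hP2eq : ∀ n, P2 n ω = 1 / ((∏ i ∈ Finset.range n, (if X i ω then q₁ else 1 - q₁)) /
      (∏ i ∈ Finset.range n, (if X i ω then q₂ else 1 - q₂)) + 1) := by
    intro n
    rw [hP2 n ω]
    have hB : (0:ℝ) < ∏ i ∈ Finset.range n, (if X i ω then q₂ else 1 - q₂) :=
      Finset.prod_pos fun i _ => hposif₂ i
    have hA : (0:ℝ) < ∏ i ∈ Finset.range n, (if X i ω then q₁ else 1 - q₁) :=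
      Finset.prod_pos fun i _ => hposif₁ i
    field_simp
  simp only [hP2eq]
  have h1 : Tendsto (fun n : ℕ => (1:ℝ) /
      ((∏ i ∈ Finset.range n, (if X i ω then q₁ else 1 - q₁)) /
      (∏ i ∈ Finset.range n, (if X i ω then q₂ else 1 - q₂)) + 1)) atTop
      (nhds (1 / (0 + 1))) :=
    Tendsto.div tendsto_const_nhds (hR0.add tendsto_const_nhds) (by norm_num)
  simpa using h1
end
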